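/- Let A, R > 0 with exp(A/R²) < 2, and let (C_k) be a sequence of nonnegative reals satisfying C_0 ≤ A/(R+n+1)² and the recursion C_k ≤ C_{k-1}·(1 + 2A/(R+n+1-k)³) + 2A/((R+n+k)²(R+n-k)²) for 1 ≤ k ≤ n. Then there is a constant (e.g. 4A for R sufficiently large depending only on A) such that C_n ≤ 4A/(R+n)² for all large R. -/

import Mathlib

/-- the recursive error estimate. For every `A > 0` there is `R₀` such
that for all `R ≥ R₀` with `exp(A/R²) < 2`, any nonnegative sequence `C` with
`C 0 ≤ A/(R+n+1)²` and
`C k ≤ C (k-1)·(1 + 2A/(R+n+1-k)³) + 2A/((R+n+k)²(R+n-k)²)` for `1 ≤ k ≤ n`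
satisfies `C n ≤ 4A/(R+n)²`. -/
theorem stmt4 (A : ℝ) (hA : 0 < A) :
    ∃ R₀ : ℝ, 0 < R₀ ∧ ∀ R : ℝ, R₀ ≤ R → Real.exp (A/R^2) < 2 →
      ∀ (n : ℕ) (C : ℕ → ℝ), (∀ k, 0 ≤ C k) →
        C 0 ≤ A/(R+(n:ℝ)+1)^2 →
        (∀ k : ℕ, 1 ≤ k → k ≤ n →
          C k ≤ C (k-1) * (1 + 2*A/(R+(n:ℝ)+1-(k:ℝ))^3)
            + 2*A/((R+(n:ℝ)+(k:ℝ))^2*(R+(n:ℝ)-(k:ℝ))^2)) →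
        C n ≤ 4*A/(R+(n:ℝ))^2 := by
  refine ⟨8*A+3, by positivity, ?_⟩
  intro R hR _ n C hCnn hCinit hrec
  have hR3 : (3:ℝ) ≤ R := by nlinarith
  have hR8A : 8*A ≤ R := by linarith
  have hRpos : (0:ℝ) < R := by linarith
  set T : ℕ → ℝ := fun m => 8*A^2/(R+(m:ℝ)+1)^3 + 2*A/(R+(m:ℝ))^2 with hT
  set φ : ℕ → ℝ := fun j => ∑ m ∈ Finset.range j, T m with hφ
  have hxpos : ∀ m : ℕ, (0:ℝ) < R + (m:ℝ) := by
    intro m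
    have : (0:ℝ) ≤ (m:ℝ) := Nat.cast_nonneg m
    linarith
  have hTnn : ∀ m : ℕ, 0 ≤ T m := by
    intro m
    have h1 := hxpos m
    have h2 : (0:ℝ) < R + (m:ℝ) + 1 := by linarith
    simp only [hT]
    positivity
  have hφmono : ∀ j j' : ℕ, j ≤ j' → φ j ≤ φ j' := by
    intro j j' hj
    apply Finset.sum_le_sum_of_subset_of_nonneg (Finset.range_subset_range.mpr hj)
    intro m _ _
    exact hTnn m
  -- telescoping bound on each term
  have hTbound : ∀ m : ℕ, T m ≤ (8*A^2/R + 2*A) * (1/(R+(m:ℝ)-1) - 1/(R+(m:ℝ)+1-1)) := by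
    intro m
    set x : ℝ := R + (m:ℝ) with hx
    have hx3 : (3:ℝ) ≤ x := by
      have : (0:ℝ) ≤ (m:ℝ) := Nat.cast_nonneg m
      simp only [hx]; linarith
    have hx1 : (0:ℝ) < x - 1 := by linarith
    have hx0 : (0:ℝ) < x := by linarith
    have he : 1/(x-1) - 1/(x+1-1) = 1/((x-1)*x) := by
      have : x + 1 - 1 = x := by ring
      rw [this]
      field_simp
      ring
    rw [he]
    have h1 : 8*A^2/(x+1)^3 ≤ 8*A^2/(R*((x-1)*x)) :=
      div_le_div_of_nonneg_left (by positivity) (by positivity)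
        (by nlinarith [sq_nonneg x])
    have h2 : 2*A/x^2 ≤ 2*A/((x-1)*x) :=
      div_le_div_of_nonneg_left (by positivity) (by positivity) (by nlinarith)
    have h3 : 8*A^2/(R*((x-1)*x)) = 8*A^2/R * (1/((x-1)*x)) := by
      field_simp
    have h4 : 2*A/((x-1)*x) = 2*A * (1/((x-1)*x)) := by ring
    simp only [hT]
    rw [show R + (m:ℝ) = x from rfl]
    calc 8*A^2/(x+1)^3 + 2*A/x^2 ≤ 8*A^2/(R*((x-1)*x)) + 2*A/((x-1)*x) := by
          exact add_le_add h1 h2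
      _ = (8*A^2/R + 2*A) * (1/((x-1)*x)) := by rw [h3, h4]; ring
  have hφn : φ n ≤ 3*A := by
    have hsum : φ n ≤ (8*A^2/R + 2*A) *
        ∑ m ∈ Finset.range n, ((fun m : ℕ => 1/(R+(m:ℝ)-1)) m - (fun m : ℕ => 1/(R+(m:ℝ)-1)) (m+1)) := by
      rw [Finset.mul_sum]
      apply Finset.sum_le_sum
      intro m _
      have := hTbound m
      simpa [Nat.cast_add, Nat.cast_one, add_assoc] using this
    rw [Finset.sum_range_sub'] at hsum
    have htel : (fun m : ℕ => 1/(R+(m:ℝ)-1)) 0 - (fun m : ℕ => 1/(R+(m:ℝ)-1)) n ≤ 1/(R-1) := by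
      simp only [Nat.cast_zero, add_zero]
      have hn1 : (0:ℝ) < R + (n:ℝ) - 1 := by
        have : (0:ℝ) ≤ (n:ℝ) := Nat.cast_nonneg n
        linarith
      have h0 : 0 ≤ 1/(R+(n:ℝ)-1) := by positivity
      linarith
    have hcoef : (0:ℝ) ≤ 8*A^2/R + 2*A := by positivity
    have h5 : (8*A^2/R + 2*A) * (1/(R-1)) ≤ 3*A := by
      rw [mul_one_div, div_le_iff₀ (by linarith : (0:ℝ) < R - 1)]
      have h6 : 8*A^2/R ≤ A := by
        rw [div_le_iff₀ hRpos]
        nlinarith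
      nlinarith
    calc φ n ≤ (8*A^2/R + 2*A) *
        ((fun m : ℕ => 1/(R+(m:ℝ)-1)) 0 - (fun m : ℕ => 1/(R+(m:ℝ)-1)) n) := hsum
      _ ≤ (8*A^2/R + 2*A) * (1/(R-1)) := by
          exact mul_le_mul_of_nonneg_left htel hcoef
      _ ≤ 3*A := h5
  have hRn : (0:ℝ) < R + (n:ℝ) := hxpos n
  -- main induction
  have main : ∀ k, k ≤ n → C k ≤ (4*A - φ (n - k))/(R+(n:ℝ))^2 := by
    intro k
    induction k with
    | zero =>
      intro _
      simp only [Nat.sub_zero]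
      have h1 : A/(R+(n:ℝ)+1)^2 ≤ A/(R+(n:ℝ))^2 :=
        div_le_div_of_nonneg_left hA.le (by positivity) (by nlinarith)
      have h2 : A/(R+(n:ℝ))^2 ≤ (4*A - φ n)/(R+(n:ℝ))^2 := by
        gcongr
        linarith
      linarith [hCinit]
    | succ k ih =>
      intro hk1
      have hkn : k ≤ n := by omega
      have ihk := ih hkn
      set m : ℕ := n - (k+1) with hm
      have hnk : n - k = m + 1 := by omega
      have hmcast : (m:ℝ) = (n:ℝ) - (k:ℝ) - 1 := by
        have : ((n - (k+1) : ℕ) : ℝ) = (n:ℝ) - ((k+1:ℕ):ℝ) := Nat.cast_sub hk1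
        push_cast at this
        rw [hm, this]; ring
      have hrec' := hrec (k+1) (by omega) hk1
      simp only [Nat.add_sub_cancel] at hrec'
      push_cast at hrec'
      -- rewrite the recursion in terms of m
      have e1 : R + (n:ℝ) + 1 - ((k:ℝ)+1) = R + (m:ℝ) + 1 := by rw [hmcast]; ring
      have e2 : R + (n:ℝ) - ((k:ℝ)+1) = R + (m:ℝ) := by rw [hmcast]; ring
      rw [e1, e2] at hrec'
      have hRm : (0:ℝ) < R + (m:ℝ) := hxpos m
      have hRm1 : (0:ℝ) < R + (m:ℝ) + 1 := by linarith
      have hφm1 : φ (m+1) ≤ 3*A := by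
        have : m + 1 ≤ n := by omega
        exact le_trans (hφmono _ _ this) hφn
      have hφm1' : φ (m+1) = φ m + T m := by
        simp only [hφ]
        rw [Finset.sum_range_succ]
      have hM'le : (4*A - φ (m+1))/(R+(n:ℝ))^2 ≤ (4*A)/(R+(n:ℝ))^2 := by
        gcongr
        have : 0 ≤ φ (m+1) := by
          simp only [hφ]
          exact Finset.sum_nonneg fun i _ => hTnn i
        linarith
      have hε : (0:ℝ) ≤ 2*A/(R+(m:ℝ)+1)^3 := by positivity
      have hCk : C k ≤ (4*A - φ (m+1))/(R+(n:ℝ))^2 := by rw [hnk] at ihk; exact ihk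
      have step1 : C k * (1 + 2*A/(R+(m:ℝ)+1)^3)
          ≤ (4*A - φ (m+1))/(R+(n:ℝ))^2 + (4*A)/(R+(n:ℝ))^2 * (2*A/(R+(m:ℝ)+1)^3) := by
        have h1pos : (0:ℝ) < 1 + 2*A/(R+(m:ℝ)+1)^3 := by positivity
        have := mul_le_mul_of_nonneg_right hCk (le_of_lt h1pos)
        calc C k * (1 + 2*A/(R+(m:ℝ)+1)^3)
            ≤ (4*A - φ (m+1))/(R+(n:ℝ))^2 * (1 + 2*A/(R+(m:ℝ)+1)^3) := this
          _ = (4*A - φ (m+1))/(R+(n:ℝ))^2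
              + (4*A - φ (m+1))/(R+(n:ℝ))^2 * (2*A/(R+(m:ℝ)+1)^3) := by ring
          _ ≤ (4*A - φ (m+1))/(R+(n:ℝ))^2 + (4*A)/(R+(n:ℝ))^2 * (2*A/(R+(m:ℝ)+1)^3) := by
              have := mul_le_mul_of_nonneg_right hM'le hε
              linarith
      have step2 : 2*A/((R+(n:ℝ)+((k:ℝ)+1))^2*(R+(m:ℝ))^2)
          ≤ 2*A/((R+(n:ℝ))^2*(R+(m:ℝ))^2) := by
        have hk0 : (0:ℝ) ≤ (k:ℝ) := Nat.cast_nonneg k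
        have hb : (0:ℝ) < (R+(n:ℝ))^2*(R+(m:ℝ))^2 := mul_pos (pow_pos hRn 2) (pow_pos hRm 2)
        have hc : (R+(n:ℝ))^2*(R+(m:ℝ))^2 ≤ (R+(n:ℝ)+((k:ℝ)+1))^2*(R+(m:ℝ))^2 :=
          mul_le_mul_of_nonneg_right (pow_le_pow_left₀ hRn.le (by linarith) 2) (sq_nonneg _)
        exact div_le_div_of_nonneg_left (by positivity) hb hc
      have key : (4*A - φ (m+1))/(R+(n:ℝ))^2 + (4*A)/(R+(n:ℝ))^2 * (2*A/(R+(m:ℝ)+1)^3)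
          + 2*A/((R+(n:ℝ))^2*(R+(m:ℝ))^2) = (4*A - φ m)/(R+(n:ℝ))^2 := by
        rw [hφm1']
        have e3 : (4*A)/(R+(n:ℝ))^2 * (2*A/(R+(m:ℝ)+1)^3)
            = (8*A^2/(R+(m:ℝ)+1)^3)/(R+(n:ℝ))^2 := by
          rw [div_mul_div_comm, mul_comm ((R+(n:ℝ))^2), ← div_div]
          ring_nf
        have e4 : 2*A/((R+(n:ℝ))^2*(R+(m:ℝ))^2) = (2*A/(R+(m:ℝ))^2)/(R+(n:ℝ))^2 := by
          rw [div_div, mul_comm ((R+(n:ℝ))^2)]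
        rw [e3, e4, ← add_div, ← add_div]
        congr 1
        simp only [hT]
        ring
      have : C (k+1) ≤ (4*A - φ m)/(R+(n:ℝ))^2 := by
        calc C (k+1) ≤ C k * (1 + 2*A/(R+(m:ℝ)+1)^3)
              + 2*A/((R+(n:ℝ)+((k:ℝ)+1))^2*(R+(m:ℝ))^2) := hrec'
          _ ≤ (4*A - φ (m+1))/(R+(n:ℝ))^2 + (4*A)/(R+(n:ℝ))^2 * (2*A/(R+(m:ℝ)+1)^3)
              + 2*A/((R+(n:ℝ))^2*(R+(m:ℝ))^2) := by linarith [step1, step2]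
          _ = (4*A - φ m)/(R+(n:ℝ))^2 := key
      simpa [hm] using this
  have := main n le_rfl
  simp only [Nat.sub_self] at this
  have hφ0 : φ 0 = 0 := by simp [hφ]
  rw [hφ0, sub_zero] at this
  exact this
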